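/- If (u, v) is a matched edge in graph G with matching M, then tenacity(u) = tenacity(v) = tenacity(u, v). -/

import Mathlib

attribute [local instance] Classical.propDecidable

variable {V : Type*} [DecidableEq V]

namespace MV

/-- A walk is alternating (w.r.t. matching `M`) in the sense used for alternating paths
starting at an unmatched vertex: the `i`-th edge is matched iff `i` is odd. -/
def IsAlt (G : SimpleGraph V) (M : G.Subgraph) {a b : V} (w : G.Walk a b) : Prop :=
  ∀ i (h : i < w.edges.length), (w.edges.get ⟨i, h⟩ ∈ M.edgeSet ↔ Odd i)

/-- length of a minimum even alternating path from an unmatched vertex to `v`. -/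
noncomputable def evenlevel (G : SimpleGraph V) (M : G.Subgraph) (v : V) : ℕ∞ :=
  sInf {n : ℕ∞ | ∃ (f : V) (w : G.Walk f v),
    f ∉ M.verts ∧ w.IsPath ∧ IsAlt G M w ∧ Even w.length ∧ n = (w.length : ℕ∞)}

/-- length of a minimum odd alternating path from an unmatched vertex to `v`. -/
noncomputable def oddlevel (G : SimpleGraph V) (M : G.Subgraph) (v : V) : ℕ∞ :=
  sInf {n : ℕ∞ | ∃ (f : V) (w : G.Walk f v),
    f ∉ M.verts ∧ w.IsPath ∧ IsAlt G M w ∧ Odd w.length ∧ n = (w.length : ℕ∞)}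

noncomputable def tenacity (G : SimpleGraph V) (M : G.Subgraph) (v : V) : ℕ∞ :=
  evenlevel G M v + oddlevel G M v

noncomputable def minlevel (G : SimpleGraph V) (M : G.Subgraph) (v : V) : ℕ∞ :=
  min (evenlevel G M v) (oddlevel G M v)

noncomputable def maxlevel (G : SimpleGraph V) (M : G.Subgraph) (v : V) : ℕ∞ :=
  max (evenlevel G M v) (oddlevel G M v)

/-- the length of a minimum length augmenting path w.r.t. `M` (`⊤` if none exists). -/
noncomputable def lm (G : SimpleGraph V) (M : G.Subgraph) : ℕ∞ :=
  sInf {n : ℕ∞ | ∃ (f g : V) (w : G.Walk f g), f ∉ M.verts ∧ g ∉ M.verts ∧ f ≠ g ∧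
    w.IsPath ∧ IsAlt G M w ∧ Odd w.length ∧ n = (w.length : ℕ∞)}

/-- `w` is a minimum even- or odd-length alternating path from an unmatched vertex to `v`
  (an `evenlevel(v)` or `oddlevel(v)` path). -/
def IsMinPathTo (G : SimpleGraph V) (M : G.Subgraph) (v f : V) (w : G.Walk f v) : Prop :=
  f ∉ M.verts ∧ w.IsPath ∧ IsAlt G M w ∧
    ((Even w.length ∧ (w.length : ℕ∞) = evenlevel G M v) ∨
     (Odd w.length ∧ (w.length : ℕ∞) = oddlevel G M v))

/-- `b` is the vertex of tenacity greater than `tenacity v` on `w` furthest from the start. -/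
def IsFurthestHigh (G : SimpleGraph V) (M : G.Subgraph) (v : V) {f v' : V}
    (w : G.Walk f v') (b : V) : Prop :=
  ∃ hb : b ∈ w.support, tenacity G M v < tenacity G M b ∧
    ∀ u, ∀ hu : u ∈ w.support, tenacity G M v < tenacity G M u →
      (w.takeUntil u hu).length ≤ (w.takeUntil b hb).length

/-- `b` is the base of `v`: the furthest higher-tenacity vertex on every minimum
even or odd alternating path to `v`. -/
def IsBase (G : SimpleGraph V) (M : G.Subgraph) (v b : V) : Prop :=
  ∀ (f : V) (w : G.Walk f v), IsMinPathTo G M v f w → IsFurthestHigh G M v w b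

/-- minimum even length alternating path from `b` to `v` starting with an unmatched edge
  (`evenlevel(b; v)`). -/
noncomputable def evenlevelFrom (G : SimpleGraph V) (M : G.Subgraph) (b v : V) : ℕ∞ :=
  sInf {n : ℕ∞ | ∃ w : G.Walk b v,
    w.IsPath ∧ IsAlt G M w ∧ Even w.length ∧ n = (w.length : ℕ∞)}

/-- minimum odd length alternating path from `b` to `v` starting with an unmatched edge
  (`oddlevel(b; v)`). -/
noncomputable def oddlevelFrom (G : SimpleGraph V) (M : G.Subgraph) (b v : V) : ℕ∞ :=
  sInf {n : ℕ∞ | ∃ w : G.Walk b v,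
    w.IsPath ∧ IsAlt G M w ∧ Odd w.length ∧ n = (w.length : ℕ∞)}

def Outer (G : SimpleGraph V) (M : G.Subgraph) (v : V) : Prop :=
  evenlevel G M v < oddlevel G M v

/-- The blossom `B_{b,t}`, defined recursively, relative to a base function `bse`. -/
noncomputable def blossom (G : SimpleGraph V) (M : G.Subgraph) (bse : V → V) :
    ℕ → V → Set V
  | 0, _ => ∅
  | 1, _ => ∅
  | (t + 2), b =>
      {v | tenacity G M v = ((t + 2 : ℕ) : ℕ∞) ∧ bse v = b} ∪
      ⋃ v ∈ {u | (u = b ∨ (tenacity G M u = ((t + 2 : ℕ) : ℕ∞) ∧ bse u = b)) ∧ Outer G M u},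
        blossom G M bse t v

/-- The nesting depth `N(B_{b,t})`. -/
noncomputable def nestDepth (G : SimpleGraph V) (M : G.Subgraph) (bse : V → V) :
    ℕ → V → ℕ
  | 0, _ => 0
  | 1, _ => 0
  | (t + 2), b =>
      if {v | tenacity G M v = ((t + 2 : ℕ) : ℕ∞) ∧ bse v = b}.Nonempty then
        1 + sSup ((fun v => nestDepth G M bse t v) ''
          {u | (u = b ∨ (tenacity G M u = ((t + 2 : ℕ) : ℕ∞) ∧ bse u = b)) ∧ Outer G M u})
      else nestDepth G M bse t b

/-- `bse` assigns to each vertex of tenacity `< l_m` its (unique) base. -/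
def BaseFn (G : SimpleGraph V) (M : G.Subgraph) (bse : V → V) : Prop :=
  ∀ v, tenacity G M v < lm G M → IsBase G M v (bse v)

/-- `u` is a predecessor of `v`: `(u,v)` is the last edge of some `minlevel(v)` path. -/
def IsPred (G : SimpleGraph V) (M : G.Subgraph) (u v : V) : Prop :=
  ∃ (f : V) (w : G.Walk f v), f ∉ M.verts ∧ w.IsPath ∧ IsAlt G M w ∧
    (w.length : ℕ∞) = minlevel G M v ∧
    0 < w.length ∧ w.getVert (w.length - 1) = u

/-- A bridge is an edge of `G` that is not a prop. -/
def IsBridge (G : SimpleGraph V) (M : G.Subgraph) (u v : V) : Prop :=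
  G.Adj u v ∧ ¬ IsPred G M u v ∧ ¬ IsPred G M v u

/-- tenacity of an edge. -/
noncomputable def edgeTenacity (G : SimpleGraph V) (M : G.Subgraph) (u v : V) : ℕ∞ :=
  if s(u, v) ∈ M.edgeSet then oddlevel G M u + oddlevel G M v + 1
  else evenlevel G M u + evenlevel G M v + 1


open SimpleGraph in
lemma enat_sInf_mem {S : Set ℕ∞} (h : sInf S ≠ ⊤) : sInf S ∈ S := by
  have hne : S.Nonempty := by
    by_contra hS
    rw [Set.not_nonempty_iff_eq_empty] at hS
    simp [hS] at h
  obtain ⟨m, hm, hmin⟩ := wellFounded_lt.has_min S hne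
  have : sInf S = m := le_antisymm (sInf_le hm) (le_sInf fun b hb => not_lt.1 (hmin b hb))
  rw [this]; exact hm

lemma list_concat_get_lt {α : Type*} (l : List α) (e : α) (i : ℕ) (h : i < l.length)
    (h' : i < (l.concat e).length) : (l.concat e).get ⟨i, h'⟩ = l.get ⟨i, h⟩ := by
  simp [List.concat_eq_append, List.getElem_append_left h]

lemma list_concat_get_last {α : Type*} (l : List α) (e : α)
    (h' : l.length < (l.concat e).length) : (l.concat e).get ⟨l.length, h'⟩ = e := by
  simp [List.concat_eq_append]

lemma list_concat_get_last' {α : Type*} (l : List α) (e : α) (i : ℕ)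
    (hi : i < (l.concat e).length) (h : i = l.length) : (l.concat e).get ⟨i, hi⟩ = e := by
  subst h
  simp [List.concat_eq_append]

lemma get_congr {α : Type*} {l l' : List α} (h : l = l') (i : ℕ) (hi : i < l.length)
    (hi' : i < l'.length) : l.get ⟨i, hi⟩ = l'.get ⟨i, hi'⟩ := by
  subst h
  rfl

open SimpleGraph Walk in
lemma edges_get_eq {G : SimpleGraph V} {a b : V} (w : G.Walk a b) (i : ℕ)
    (h : i < w.edges.length) :
    w.edges.get ⟨i, h⟩ = s(w.getVert i, w.getVert (i + 1)) := by
  induction w generalizing i with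
  | nil => simp at h
  | @cons x y z hadj p ih =>
    cases i with
    | zero => simp [Walk.getVert]
    | succ n =>
      have h' : n < p.edges.length := by simpa using h
      simpa [Walk.getVert_cons_succ] using ih n h'

open SimpleGraph Walk in
lemma support_get_eq {G : SimpleGraph V} {a b : V} (w : G.Walk a b) (i : ℕ)
    (h : i < w.support.length) :
    w.support.get ⟨i, h⟩ = w.getVert i := by
  induction w generalizing i with
  | nil =>
    have h1 : i = 0 := by simpa using h
    subst h1
    simp [Walk.getVert]
  | @cons x y z hadj p ih =>
    cases i with
    | zero => simp
    | succ n =>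
      have h' : n < p.support.length := by simpa using h
      simpa [Walk.getVert_cons_succ] using ih n h'

open SimpleGraph Walk in
lemma path_getVert_inj {G : SimpleGraph V} {a b : V} {w : G.Walk a b} (hw : w.IsPath)
    {i j : ℕ} (hi : i ≤ w.length) (hj : j ≤ w.length)
    (hij : w.getVert i = w.getVert j) : i = j := by
  have hnd := hw.support_nodup
  have hi' : i < w.support.length := by rw [Walk.length_support]; omega
  have hj' : j < w.support.length := by rw [Walk.length_support]; omega
  have : w.support.get ⟨i, hi'⟩ = w.support.get ⟨j, hj'⟩ := by
    rw [support_get_eq, support_get_eq]; exact hij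
  exact congrArg Fin.val ((List.Nodup.get_inj_iff hnd).1 this)

open SimpleGraph in
lemma partner_eq {G : SimpleGraph V} {M : G.Subgraph} (hM : M.IsMatching)
    {u v x : V} (huv : M.Adj u v) (hx : M.Adj u x) : x = v := by
  obtain ⟨w, _, hw⟩ := hM (M.edge_vert huv)
  rw [hw x hx, hw v huv]

open SimpleGraph Walk in
lemma concat_isPath_iff' {G : SimpleGraph V} {a b c : V} (p : G.Walk a b) (h : G.Adj b c) :
    (p.concat h).IsPath ↔ p.IsPath ∧ c ∉ p.support := by
  rw [← Walk.isPath_reverse_iff, Walk.reverse_concat, Walk.cons_isPath_iff,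
    Walk.isPath_reverse_iff, Walk.support_reverse, List.mem_reverse]

open SimpleGraph Walk in
lemma not_mem_support {G : SimpleGraph V} {M : G.Subgraph} (hM : M.IsMatching)
    {u v : V} (huv : M.Adj u v) {f : V} (w : G.Walk f v)
    (hf : f ∉ M.verts) (hp : w.IsPath) (halt : IsAlt G M w) (hodd : Odd w.length) :
    u ∉ w.support := by
  intro hu
  obtain ⟨k, hk, hkl⟩ := Walk.mem_support_iff_exists_getVert.1 hu
  have hk0 : k ≠ 0 := by
    rintro rfl
    rw [Walk.getVert_zero] at hk
    exact hf (hk ▸ M.edge_vert huv)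
  have hkL : k ≠ w.length := by
    rintro rfl
    rw [Walk.getVert_length] at hk
    exact huv.adj_sub.ne (hk ▸ rfl)
  have hklt : k < w.length := lt_of_le_of_ne hkl hkL
  have hLodd := Nat.odd_iff.1 hodd
  rcases Nat.even_or_odd k with hke | hko
  · -- k even, use edge at index k-1 which is odd
    have hj : k - 1 < w.edges.length := by rw [Walk.length_edges]; omega
    have hjodd : Odd (k - 1) := by
      rw [Nat.odd_iff]; rcases Nat.even_iff.1 hke with h2; omega
    have hmem : w.edges.get ⟨k - 1, hj⟩ ∈ M.edgeSet := (halt _ hj).2 hjodd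
    rw [edges_get_eq] at hmem
    have hk1 : k - 1 + 1 = k := by omega
    rw [hk1, hk] at hmem
    have hadj : M.Adj u (w.getVert (k - 1)) :=
      M.adj_symm (SimpleGraph.Subgraph.mem_edgeSet.1 hmem)
    have hveq : w.getVert (k - 1) = v := partner_eq hM huv hadj
    have : w.getVert (k - 1) = w.getVert w.length := by
      rw [hveq, Walk.getVert_length]
    have := path_getVert_inj hp (by omega) le_rfl this
    omega
  · -- k odd, use edge at index k
    have hj : k < w.edges.length := by rw [Walk.length_edges]; omega
    have hmem : w.edges.get ⟨k, hj⟩ ∈ M.edgeSet := (halt _ hj).2 hko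
    rw [edges_get_eq, hk] at hmem
    have hadj : M.Adj u (w.getVert (k + 1)) := SimpleGraph.Subgraph.mem_edgeSet.1 hmem
    have hveq : w.getVert (k + 1) = v := partner_eq hM huv hadj
    have : w.getVert (k + 1) = w.getVert w.length := by
      rw [hveq, Walk.getVert_length]
    have := path_getVert_inj hp (by omega) le_rfl this
    rcases Nat.odd_iff.1 hko with h2
    omega

open SimpleGraph Walk in
lemma append_step {G : SimpleGraph V} {M : G.Subgraph} (hM : M.IsMatching)
    {u v : V} (huv : s(u, v) ∈ M.edgeSet) {f : V} (w : G.Walk f v)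
    (hf : f ∉ M.verts) (hp : w.IsPath) (halt : IsAlt G M w) (hodd : Odd w.length) :
    ∃ w' : G.Walk f u, w'.IsPath ∧ IsAlt G M w' ∧ w'.length = w.length + 1 := by
  have hMuv : M.Adj u v := SimpleGraph.Subgraph.mem_edgeSet.1 huv
  have hGvu : G.Adj v u := (M.adj_symm hMuv).adj_sub
  have hu : u ∉ w.support := not_mem_support hM hMuv w hf hp halt hodd
  refine ⟨w.concat hGvu, (concat_isPath_iff' w hGvu).2 ⟨hp, hu⟩, ?_, by
    rw [Walk.length_concat]⟩
  intro i hi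
  have hE : (w.concat hGvu).edges = w.edges.concat s(v, u) := Walk.edges_concat _ _
  have hi2 : i < (w.edges.concat s(v, u)).length := by rw [← hE]; exact hi
  have hilen : i < w.length + 1 := by
    simpa [Walk.length_edges] using hi2
  rcases lt_or_ge i w.edges.length with hilt | hige
  · rw [get_congr hE i hi hi2, list_concat_get_lt _ _ _ hilt]
    exact halt i hilt
  · have hieq : i = w.edges.length := by
      rw [Walk.length_edges] at hige ⊢; omega
    rw [get_congr hE i hi hi2, list_concat_get_last' _ _ _ _ hieq]
    constructor
    · intro _
      rw [hieq, Walk.length_edges]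
      exact hodd
    · intro _
      rw [Sym2.eq_swap]
      exact huv

open SimpleGraph Walk in
lemma drop_step {G : SimpleGraph V} {M : G.Subgraph} (hM : M.IsMatching)
    {u v : V} (huv : s(u, v) ∈ M.edgeSet) {f : V} (w : G.Walk f u)
    (hf : f ∉ M.verts) (hp : w.IsPath) (halt : IsAlt G M w) (heven : Even w.length)
    (hpos : 0 < w.length) :
    ∃ w' : G.Walk f v, w'.IsPath ∧ IsAlt G M w' ∧ w.length = w'.length + 1 := by
  have hMuv : M.Adj u v := SimpleGraph.Subgraph.mem_edgeSet.1 huv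
  have hn : ¬ w.reverse.Nil := by
    rw [Walk.not_nil_iff_lt_length, Walk.length_reverse]; exact hpos
  obtain ⟨x, h, q, hq⟩ := Walk.not_nil_iff.1 hn
  have hw : w = q.reverse.concat h.symm := by
    rw [← Walk.reverse_reverse w, hq, Walk.reverse_cons]
    exact (Walk.concat_eq_append _ _).symm
  have hlen : w.length = q.reverse.length + 1 := by rw [hw, Walk.length_concat]
  -- the last edge is matched
  have hj : q.reverse.length < w.edges.length := by rw [Walk.length_edges]; omega
  have hjodd : Odd q.reverse.length := by
    rcases Nat.even_iff.1 heven with h2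
    rw [Nat.odd_iff]; omega
  have hmem : w.edges.get ⟨q.reverse.length, hj⟩ ∈ M.edgeSet := (halt _ hj).2 hjodd
  have hE : w.edges = q.reverse.edges.concat s(x, u) := by
    rw [hw]; exact Walk.edges_concat _ _
  have hj' : q.reverse.length < (q.reverse.edges.concat s(x, u)).length := by
    simp [Walk.length_edges]
  have hedges : w.edges.get ⟨q.reverse.length, hj⟩ = s(x, u) := by
    rw [get_congr hE _ hj hj', list_concat_get_last' _ _ _ _ (by rw [Walk.length_edges])]
  rw [hedges] at hmem
  have hMux : M.Adj u x := M.adj_symm (SimpleGraph.Subgraph.mem_edgeSet.1 hmem)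
  have hxv : x = v := partner_eq hM hMuv hMux
  subst hxv
  refine ⟨q.reverse, ?_, ?_, hlen⟩
  · rw [hw] at hp
    exact ((concat_isPath_iff' _ _).1 hp).1
  · intro i hi
    have hi' : i < w.edges.length := by
      rw [Walk.length_edges] at hi ⊢; omega
    have hi2 : i < (q.reverse.edges.concat s(x, u)).length := by
      simp only [List.concat_eq_append, List.length_append, List.length_singleton]
      omega
    have heq : w.edges.get ⟨i, hi'⟩ = q.reverse.edges.get ⟨i, hi⟩ := by
      rw [get_congr hE _ hi' hi2]
      exact list_concat_get_lt _ _ _ hi _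
    rw [← heq]
    exact halt i hi'

open SimpleGraph Walk in
lemma evenlevel_eq {G : SimpleGraph V} {M : G.Subgraph} (hM : M.IsMatching)
    {u v : V} (huv : s(u, v) ∈ M.edgeSet) :
    evenlevel G M u = oddlevel G M v + 1 := by
  have hMuv : M.Adj u v := SimpleGraph.Subgraph.mem_edgeSet.1 huv
  apply le_antisymm
  · rcases eq_or_ne (oddlevel G M v) ⊤ with h | h
    · rw [h]; exact le_top.trans_eq (by simp)
    · obtain ⟨f, w, hf, hp, halt, hodd, hlen⟩ := enat_sInf_mem h
      obtain ⟨w', h1, h2, h3⟩ := append_step hM huv w hf hp halt hodd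
      have : evenlevel G M u ≤ (w'.length : ℕ∞) :=
        sInf_le ⟨f, w', hf, h1, h2, by rw [h3]; exact hodd.add_one, rfl⟩
      have hlen' : oddlevel G M v = (w.length : ℕ∞) := hlen
      refine this.trans_eq ?_
      rw [h3, hlen']
      push_cast
      ring
  · apply le_sInf
    rintro n ⟨f, w, hf, hp, halt, heven, rfl⟩
    have hpos : 0 < w.length := by
      rcases Nat.eq_zero_or_pos w.length with h0 | h0
      · exfalso
        have := Walk.eq_of_length_eq_zero h0
        exact hf (this ▸ M.edge_vert hMuv)
      · exact h0
    obtain ⟨w', h1, h2, h3⟩ := drop_step hM huv w hf hp halt heven hpos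
    have hodd' : Odd w'.length := by
      rcases Nat.even_iff.1 heven with h2'
      rw [Nat.odd_iff]; omega
    have hle : oddlevel G M v ≤ (w'.length : ℕ∞) :=
      sInf_le ⟨f, w', hf, h1, h2, hodd', rfl⟩
    calc oddlevel G M v + 1 ≤ (w'.length : ℕ∞) + 1 := add_le_add_left hle 1
      _ = (w.length : ℕ∞) := by rw [h3]; push_cast; ring

/-- If `(u, v)` is a matched edge then `tenacity(u) = tenacity(v) = tenacity(u, v)`. -/
theorem stmt0 (G : SimpleGraph V) (M : G.Subgraph) (hM : M.IsMatching)
    (hex : ∃ x, x ∉ M.verts)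
    (u v : V) (huv : s(u, v) ∈ M.edgeSet) :
    tenacity G M u = oddlevel G M u + oddlevel G M v + 1 ∧
    tenacity G M v = oddlevel G M u + oddlevel G M v + 1 := by
  have huv' : s(v, u) ∈ M.edgeSet := by rwa [Sym2.eq_swap] at huv
  have h1 : evenlevel G M u = oddlevel G M v + 1 := evenlevel_eq hM huv
  have h2 : evenlevel G M v = oddlevel G M u + 1 := evenlevel_eq hM huv'
  constructor
  · rw [tenacity, h1]; ring
  · rw [tenacity, h2]; ring

end MV
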